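/- Let q ∈ (1,2], ρ > 0, and define for C¹ functions f: ℝⁿ → ℝ and F: ℝⁿ → ℝ^m the convex model P̄(y;x) = f(x) + ⟨∇f(x), y−x⟩ + (ρ/q)‖F(x)+J_F(x)(y−x)‖_q^q and, for β > 0 and 0 < r ≤ 1, the quantities Ψ̄(x, β) = P̄(x;x) − min_{y ∈ ℝⁿ}{P̄(y;x) + (β/2)‖y−x‖²} and Ψ_r(x) = P̄(x;x) − min_{‖y−x‖≤r} P̄(y;x). Then Ψ̄(x, β) ≥ (1/2)·min(1, Ψ_r(x)/(β r²))·Ψ_r(x). -/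

import Mathlib

set_option maxHeartbeats 1000000

lemma key_abs_rpow (q a b s t : ℝ) (hq : 1 ≤ q) (ha : 0 ≤ a) (hb : 0 ≤ b) (hab : a + b = 1) :
    |a * s + b * t| ^ q ≤ a * |s| ^ q + b * |t| ^ q := by
  have h1 : |a * s + b * t| ≤ a * |s| + b * |t| := by
    calc |a * s + b * t| ≤ |a * s| + |b * t| := abs_add_le _ _
      _ = a * |s| + b * |t| := by rw [abs_mul, abs_mul, abs_of_nonneg ha, abs_of_nonneg hb]
  have h2 : |a * s + b * t| ^ q ≤ (a * |s| + b * |t|) ^ q :=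
    Real.rpow_le_rpow (abs_nonneg _) h1 (by linarith)
  have h3 := (convexOn_rpow hq).2 (Set.mem_Ici.2 (abs_nonneg s)) (Set.mem_Ici.2 (abs_nonneg t))
    ha hb hab
  simp only [smul_eq_mul] at h3
  linarith

theorem pseudo_criticality_lower_bound (n m : ℕ) (q ρ r β : ℝ)
    (hq1 : 1 < q) (hq2 : q ≤ 2) (hρ : 0 < ρ) (hr0 : 0 < r) (hr1 : r ≤ 1) (hβ : 0 < β)
    (f : EuclideanSpace ℝ (Fin n) → ℝ) (F : EuclideanSpace ℝ (Fin n) → Fin m → ℝ)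
    (gf : EuclideanSpace ℝ (Fin n) → EuclideanSpace ℝ (Fin n))
    (gF : EuclideanSpace ℝ (Fin n) → Fin m → EuclideanSpace ℝ (Fin n))
    (hf : ∀ x, HasGradientAt f (gf x) x)
    (hF : ∀ x i, HasGradientAt (fun y => F y i) (gF x i) x)
    (Pbar : EuclideanSpace ℝ (Fin n) → EuclideanSpace ℝ (Fin n) → ℝ)
    (hPbar : ∀ x y, Pbar x y =
      f x + (inner ℝ (gf x) (y - x) : ℝ) +
        (ρ / q) * ∑ i, |F x i + (inner ℝ (gF x i) (y - x) : ℝ)| ^ q)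
    (x : EuclideanSpace ℝ (Fin n)) :
    Pbar x x - sInf (Set.range fun y => Pbar x y + (β / 2) * ‖y - x‖ ^ 2) ≥
      (1 / 2) *
        min 1 ((Pbar x x - sInf (Pbar x '' Metric.closedBall x r)) / (β * r ^ 2)) *
        (Pbar x x - sInf (Pbar x '' Metric.closedBall x r)) := by
  have hq0 : (0:ℝ) ≤ q := by linarith
  have hρq : 0 ≤ ρ / q := by positivity
  -- continuity of Pbar x
  have hcont : Continuous (Pbar x) := by
    have : Continuous fun y : EuclideanSpace ℝ (Fin n) =>
        f x + (inner ℝ (gf x) (y - x) : ℝ) +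
          (ρ / q) * ∑ i, |F x i + (inner ℝ (gF x i) (y - x) : ℝ)| ^ q := by
      apply Continuous.add
      · exact continuous_const.add (continuous_const.inner (continuous_id.sub continuous_const))
      · apply continuous_const.mul
        apply continuous_finset_sum
        intro i _
        exact ((continuous_const.add
          (continuous_const.inner (continuous_id.sub continuous_const))).abs).rpow_const
          (fun y => Or.inr hq0)
      done
    have hfe : Pbar x = fun y => f x + (inner ℝ (gf x) (y - x) : ℝ) +
        (ρ / q) * ∑ i, |F x i + (inner ℝ (gF x i) (y - x) : ℝ)| ^ q := funext (hPbar x)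
    rw [hfe]; exact this
  have hxball : x ∈ Metric.closedBall x r := Metric.mem_closedBall_self hr0.le
  obtain ⟨s, hs, hmin⟩ := (isCompact_closedBall x r).exists_isMinOn ⟨x, hxball⟩
    hcont.continuousOn
  -- sInf of image equals Pbar x s
  have himg : sInf (Pbar x '' Metric.closedBall x r) = Pbar x s := by
    apply le_antisymm
    · exact csInf_le ⟨Pbar x s, fun z ⟨w, hw, hz⟩ => hz ▸ hmin hw⟩ ⟨s, hs, rfl⟩
    · exact le_csInf ⟨Pbar x x, x, hxball, rfl⟩ fun z ⟨w, hw, hz⟩ => hz ▸ hmin hw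
  set Ψ : ℝ := Pbar x x - sInf (Pbar x '' Metric.closedBall x r) with hΨ
  have hΨs : Ψ = Pbar x x - Pbar x s := by rw [hΨ, himg]
  have hΨ0 : 0 ≤ Ψ := by rw [hΨs]; have := hmin hxball; simpa using this
  set θ : ℝ := min 1 (Ψ / (β * r ^ 2)) with hθdef
  have hθ0 : 0 ≤ θ := le_min zero_le_one (by positivity)
  have hθ1 : θ ≤ 1 := min_le_left _ _
  have hθ2 : θ * (β * r ^ 2) ≤ Ψ := by
    have h := min_le_right 1 (Ψ / (β * r ^ 2))
    have hbr : 0 < β * r ^ 2 := by positivity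
    calc θ * (β * r ^ 2) ≤ (Ψ / (β * r ^ 2)) * (β * r ^ 2) := by
          exact mul_le_mul_of_nonneg_right h hbr.le
      _ = Ψ := by field_simp
  set y : EuclideanSpace ℝ (Fin n) := x + θ • (s - x) with hy
  have hyx : y - x = θ • (s - x) := by rw [hy]; abel
  -- convexity-type inequality
  have hconv : Pbar x y ≤ (1 - θ) * Pbar x x + θ * Pbar x s := by
    rw [hPbar x y, hPbar x x, hPbar x s, hyx]
    have hzz : (x : EuclideanSpace ℝ (Fin n)) - x = 0 := by abel
    rw [hzz]
    simp only [inner_zero_right, real_inner_smul_right]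
    have hsum : ∑ i, |F x i + θ * (inner ℝ (gF x i) (s - x) : ℝ)| ^ q ≤
        (1 - θ) * ∑ i, |F x i + (0:ℝ)| ^ q +
          θ * ∑ i, |F x i + (inner ℝ (gF x i) (s - x) : ℝ)| ^ q := by
      rw [Finset.mul_sum, Finset.mul_sum, ← Finset.sum_add_distrib]
      apply Finset.sum_le_sum
      intro i _
      have h := key_abs_rpow q (1 - θ) θ (F x i) (F x i + (inner ℝ (gF x i) (s - x) : ℝ))
        hq1.le (by linarith) hθ0 (by ring)
      have he : (1 - θ) * F x i + θ * (F x i + (inner ℝ (gF x i) (s - x) : ℝ)) =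
          F x i + θ * (inner ℝ (gF x i) (s - x) : ℝ) := by ring
      rw [he] at h
      simpa using h
    have := mul_le_mul_of_nonneg_left hsum hρq
    nlinarith [this]
  have hynorm : ‖y - x‖ ^ 2 ≤ θ ^ 2 * r ^ 2 := by
    rw [hyx, norm_smul]
    have hsr : ‖s - x‖ ≤ r := by
      have := Metric.mem_closedBall.1 hs
      rwa [dist_eq_norm] at this
    have h1 : ‖θ • (s-x)‖ = |θ| * ‖s - x‖ := norm_smul _ _
    rw [Real.norm_eq_abs, abs_of_nonneg hθ0]
    have h2 := norm_nonneg (s - x)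
    nlinarith [mul_le_mul hsr hsr h2 hr0.le, sq_nonneg θ, mul_le_mul_of_nonneg_left (mul_le_mul hsr hsr h2 hr0.le) (sq_nonneg θ)]
  -- bounded below of the range
  have hbdd : BddBelow (Set.range fun z => Pbar x z + (β / 2) * ‖z - x‖ ^ 2) := by
    refine ⟨f x - ‖gf x‖ ^ 2 / (2 * β), ?_⟩
    rintro v ⟨z, rfl⟩
    dsimp only
    rw [hPbar x z]
    have hcs : -(‖gf x‖ * ‖z - x‖) ≤ (inner ℝ (gf x) (z - x) : ℝ) :=
      neg_le_of_abs_le (abs_real_inner_le_norm _ _)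
    have hsum0 : 0 ≤ ∑ i, |F x i + (inner ℝ (gF x i) (z - x) : ℝ)| ^ q :=
      Finset.sum_nonneg fun i _ => Real.rpow_nonneg (abs_nonneg _) q
    have hterm : 0 ≤ (ρ / q) * ∑ i, |F x i + (inner ℝ (gF x i) (z - x) : ℝ)| ^ q :=
      mul_nonneg hρq hsum0
    have hquad : -(‖gf x‖ * ‖z - x‖) + (β / 2) * ‖z - x‖ ^ 2 ≥ -(‖gf x‖ ^ 2 / (2 * β)) := by
      have hkey : (β / 2) * ‖z - x‖ ^ 2 - ‖gf x‖ * ‖z - x‖ + ‖gf x‖ ^ 2 / (2 * β) =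
          (β * ‖z - x‖ - ‖gf x‖) ^ 2 / (2 * β) := by
        field_simp
        ring
      have hpos : 0 ≤ (β * ‖z - x‖ - ‖gf x‖) ^ 2 / (2 * β) := by positivity
      linarith [hkey ▸ hpos]
    linarith
  have hle : sInf (Set.range fun z => Pbar x z + (β / 2) * ‖z - x‖ ^ 2) ≤
      Pbar x y + (β / 2) * ‖y - x‖ ^ 2 := csInf_le hbdd ⟨y, rfl⟩
  have hfinal : Pbar x x - (Pbar x y + (β / 2) * ‖y - x‖ ^ 2) ≥ (1/2) * θ * Ψ := by
    have h1 : Pbar x x - Pbar x y ≥ θ * Ψ := by rw [hΨs]; nlinarith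
    nlinarith [mul_nonneg hθ0 (sub_nonneg.2 hθ2)]
  calc Pbar x x - sInf (Set.range fun z => Pbar x z + (β / 2) * ‖z - x‖ ^ 2) ≥
      Pbar x x - (Pbar x y + (β / 2) * ‖y - x‖ ^ 2) := by linarith
    _ ≥ (1/2) * θ * Ψ := hfinal
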